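/- Let G be a centerless group with the weakly Howson property. Then the following are equivalent: (i) for every m ≥ 1, the group G × ℤ^m has the finitely generated fixed subgroup property of automorphisms; (ii) G has the finitely generated fixed subgroup property of automorphisms and the derived subgroup [G, G] is finitely generated. -/

import Mathlib

/-- The fixed subgroup of an endomorphism of a group. -/
def fixedSubgroup {G : Type*} [Group G] (φ : G →* G) : Subgroup G where
  carrier := {g | φ g = g}
  one_mem' := map_one φ
  mul_mem' := by
    intro a b ha hb
    simp only [Set.mem_setOf_eq, map_mul] at *
    rw [ha, hb]
  inv_mem' := by
    intro a ha
    simp only [Set.mem_setOf_eq, map_inv] at *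
    rw [ha]

/-- A group has the weakly Howson property if the intersection of any two finitely
generated subgroups, one of which is normal, is finitely generated. -/
def WeaklyHowson (G : Type*) [Group G] : Prop :=
  ∀ H K : Subgroup G, H.Normal → H.FG → K.FG → (H ⊓ K).FG


section Aux

variable {G : Type*} [Group G]

lemma mem_fixedSubgroup_iff (φ : G →* G) {g : G} : g ∈ fixedSubgroup φ ↔ φ g = g := Iff.rfl

lemma subgroup_fg_of_comm_fg {A : Type*} [CommGroup A] [Group.FG A] (K : Subgroup A) : K.FG := by
  have : AddGroup.FG (Additive A) := GroupFG.iff_add_fg.mp ‹_›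
  have h1 : Module.Finite ℤ (Additive A) := Module.Finite.iff_addGroup_fg.mpr this
  have h3 := IsNoetherian.noetherian (AddSubgroup.toIntSubmodule (Subgroup.toAddSubgroup K))
  rw [Submodule.fg_iff_addSubgroup_fg] at h3
  exact (AddSubgroup.fg_iff_mul_fg _).mp h3

lemma group_fg_of_ker_range {H : Type*} [Group H] (f : G →* H)
    (hk : f.ker.FG) (hr : f.range.FG) : Group.FG G := by
  obtain ⟨S, hS⟩ := hk
  obtain ⟨T, hT⟩ := hr
  choose lift hliftspec using fun t (ht : (t:H) ∈ f.range) => ht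
  classical
  let T' : Finset G := T.attach.image fun t => lift t.1 (hT ▸ Subgroup.subset_closure t.2)
  refine ⟨⟨S ∪ T', ?_⟩⟩
  rw [eq_top_iff]
  intro g _
  set C := Subgroup.closure ((S ∪ T' : Finset G) : Set G) with hC
  have hSC : (Subgroup.closure (S : Set G)) ≤ C := Subgroup.closure_mono (by
    intro x hx; simp [T']; exact Or.inl hx)
  have hker : f.ker ≤ C := hS ▸ hSC
  have hTC : (Subgroup.closure ((T' : Finset G) : Set G)) ≤ C := Subgroup.closure_mono (by
    intro x hx; simp at hx ⊢; exact Or.inr hx)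
  have himg : f.range ≤ Subgroup.map f (Subgroup.closure ((T' : Finset G) : Set G)) := by
    rw [MonoidHom.map_closure]
    rw [← hT]
    apply Subgroup.closure_mono
    intro t ht
    refine ⟨lift t (hT ▸ Subgroup.subset_closure ht), ?_, hliftspec _ _⟩
    simp [T']
    exact ⟨t, ht, rfl⟩
  obtain ⟨c, hc, hfc⟩ := himg ⟨g, rfl⟩
  have : g * c⁻¹ ∈ f.ker := by simp [MonoidHom.mem_ker, map_mul, hfc]
  have := mul_mem (hker this) (hTC hc)
  simpa using this

lemma fg_subgroupOf {K L : Subgroup G} (h : K ≤ L) (hK : K.FG) : (K.subgroupOf L).FG := by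
  have h1 : Group.FG K := (Group.fg_iff_subgroup_fg K).mpr hK
  have h2 : Group.FG (K.subgroupOf L) :=
    Group.fg_of_surjective (f := (Subgroup.subgroupOfEquivOfLe h).symm.toMonoidHom)
      (Subgroup.subgroupOfEquivOfLe h).symm.surjective
  exact (Group.fg_iff_subgroup_fg _).mp h2

lemma fg_of_ker_le {A : Type*} [CommGroup A] [Group.FG A] (f : G →* A)
    (L : Subgroup G) (hle : f.ker ≤ L) (hk : f.ker.FG) : L.FG := by
  have h1 : (f.comp L.subtype).ker = f.ker.subgroupOf L := by
    ext x; simp [Subgroup.mem_subgroupOf, MonoidHom.mem_ker]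
  have h2 : Group.FG L :=
    group_fg_of_ker_range (f.comp L.subtype) (h1 ▸ fg_subgroupOf hle hk)
      (subgroup_fg_of_comm_fg _)
  exact (Group.fg_iff_subgroup_fg _).mp h2

lemma ker_abelianization_of :
    (Abelianization.of : G →* Abelianization G).ker = commutator G := by
  ext x
  rw [MonoidHom.mem_ker]
  show (QuotientGroup.mk x : G ⧸ commutator G) = 1 ↔ _
  rw [QuotientGroup.eq_one_iff]



lemma subgroup_fg_map {H : Type*} [Group H] (f : G →* H) {K : Subgroup G} (h : K.FG) :
    (K.map f).FG := by
  have h1 : Group.FG K := (Group.fg_iff_subgroup_fg K).mpr h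
  have h2 : Group.FG ((f.comp K.subtype).range) := Group.fg_range _
  have heq : K.map f = (f.comp K.subtype).range := by
    ext x
    simp [Subgroup.mem_map, MonoidHom.mem_range]
  exact heq ▸ (Group.fg_iff_subgroup_fg _).mp h2


lemma fixedSubgroup_eq_map_prodCongr {Z : Type*} [CommGroup Z] (ψ : G ≃* G) (e : Z ≃* Z) :
    fixedSubgroup ψ.toMonoidHom =
      Subgroup.map (MonoidHom.fst G Z) (fixedSubgroup (ψ.prodCongr e).toMonoidHom) := by
  ext g
  simp only [Subgroup.mem_map, mem_fixedSubgroup_iff, MulEquiv.coe_toMonoidHom,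
    MonoidHom.coe_fst]
  constructor
  · intro h
    refine ⟨(g, 1), ?_, rfl⟩
    show (ψ g, e 1) = (g, 1)
    rw [h, map_one]
  · rintro ⟨⟨a, b⟩, hab, rfl⟩
    rw [show (ψ.prodCongr e) (a, b) = (ψ a, e b) from rfl, Prod.mk.injEq] at hab
    exact hab.1


abbrev Zm (m : ℕ) := Multiplicative (Fin m → ℤ)

lemma group_fg_of_inv_fix (h : (fixedSubgroup ((MulEquiv.refl G).prodCongr (MulEquiv.inv (Zm 1))).toMonoidHom).FG) :
    Group.FG G := by
  have heq : fixedSubgroup ((MulEquiv.refl G).prodCongr (MulEquiv.inv (Zm 1))).toMonoidHom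
      = (⊤ : Subgroup G).prod ⊥ := by
    ext ⟨g, a⟩
    rw [mem_fixedSubgroup_iff]
    rw [show ((MulEquiv.refl G).prodCongr (MulEquiv.inv (Zm 1))).toMonoidHom (g, a)
      = (g, a⁻¹) from rfl, Prod.mk.injEq]
    simp only [Subgroup.mem_prod, Subgroup.mem_top, true_and, Subgroup.mem_bot]
    constructor
    · intro h2
      have h3 : -(a.toAdd) = a.toAdd := congrArg Multiplicative.toAdd h2
      have : a.toAdd = 0 := by
        funext i
        have := congrFun h3 i
        simp only [Pi.neg_apply, Pi.zero_apply] at this ⊢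
        omega
      exact Multiplicative.toAdd.injective (by simpa using this)
    · rintro rfl
      simp
  rw [heq] at h
  have := subgroup_fg_map (MonoidHom.fst G (Zm 1)) h
  have heq2 : ((⊤ : Subgroup G).prod ⊥).map (MonoidHom.fst G (Zm 1)) = ⊤ := by
    rw [eq_top_iff]
    intro g _
    exact ⟨(g, 1), by simp [Subgroup.mem_prod], rfl⟩
  rw [heq2] at this
  exact Group.fg_def.mpr this


def shear {Z : Type*} [CommGroup Z] (f : G →* Z) : (G × Z) ≃* (G × Z) where
  toFun x := (x.1, f x.1 * x.2)
  invFun x := (x.1, (f x.1)⁻¹ * x.2)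
  left_inv x := by ext <;> simp [mul_assoc]
  right_inv x := by ext <;> simp [mul_assoc]
  map_mul' x y := by
    ext
    · rfl
    · show f (x.1 * y.1) * (x.2 * y.2) = (f x.1 * x.2) * (f y.1 * y.2)
      rw [map_mul]
      exact mul_mul_mul_comm _ _ _ _

lemma fixedSubgroup_shear {Z : Type*} [CommGroup Z] (f : G →* Z) :
    fixedSubgroup (shear f).toMonoidHom = f.ker.prod ⊤ := by
  ext ⟨g, a⟩
  rw [mem_fixedSubgroup_iff]
  rw [show (shear f).toMonoidHom (g, a) = (g, f g * a) from rfl, Prod.mk.injEq]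
  simp [MonoidHom.mem_ker, Subgroup.mem_prod]

lemma ker_fg_of_shear {Z : Type*} [CommGroup Z] (f : G →* Z)
    (h : (fixedSubgroup (shear f).toMonoidHom).FG) : f.ker.FG := by
  rw [fixedSubgroup_shear] at h
  have := subgroup_fg_map (MonoidHom.fst G Z) h
  have heq2 : (f.ker.prod ⊤).map (MonoidHom.fst G Z) = f.ker := by
    ext g
    constructor
    · rintro ⟨⟨a, b⟩, hab, rfl⟩
      exact hab.1
    · intro hg
      exact ⟨(g, 1), by simp [Subgroup.mem_prod, hg], rfl⟩
  rwa [heq2] at this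


lemma fg_iInf_of_normal (hw : WeaklyHowson G) (hG : Group.FG G) :
    ∀ (n : ℕ) (H : Fin n → Subgroup G), (∀ i, (H i).Normal) → (∀ i, (H i).FG) →
      (⨅ i, H i).FG := by
  intro n
  induction n with
  | zero => intro H _ _; simpa [iInf_of_empty] using Group.fg_def.mp hG
  | succ n ih =>
    intro H hn hf
    have hsplit : (⨅ i, H i) = (⨅ i : Fin n, H i.succ) ⊓ H 0 := by
      apply le_antisymm
      · exact le_inf (le_iInf fun i => iInf_le _ i.succ) (iInf_le _ 0)
      · refine le_iInf fun i => ?_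
        refine Fin.cases ?_ ?_ i
        · exact inf_le_right
        · intro j; exact le_trans inf_le_left (iInf_le _ j)
    rw [hsplit]
    refine hw _ _ ?_ (ih _ (fun i => hn _) (fun i => hf _)) (hf 0)
    constructor
    intro x hx g
    simp only [Subgroup.mem_iInf] at hx ⊢
    exact fun i => (hn i.succ).conj_mem _ (hx i) g

lemma commutator_fg_aux (hw : WeaklyHowson G) (hGfg : Group.FG G)
    (hker : ∀ f : G →* Zm 1, f.ker.FG) : (commutator G).FG := by
  haveI : Group.FG (Abelianization G) :=
    Group.fg_of_surjective (f := Abelianization.of)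
      (fun x => Quotient.inductionOn' x fun g => ⟨g, rfl⟩)
  have hA : AddGroup.FG (Additive (Abelianization G)) := GroupFG.iff_add_fg.mp ‹_›
  obtain ⟨n, ι, hι, p, hp, e, ⟨eqv⟩⟩ :=
    AddCommGroup.equiv_free_prod_directSum_zmod (Additive (Abelianization G))
  set T := DirectSum ι (fun i => ZMod (p i ^ e i)) with hT
  let F : G → (Fin n →₀ ℤ) × T := fun g => eqv (Additive.ofMul (Abelianization.of g))
  have hF : ∀ a b, F (a * b) = F a + F b := by
    intro a b
    show eqv (Additive.ofMul (Abelianization.of (a * b))) = _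
    rw [map_mul]
    show eqv (Additive.ofMul (Abelianization.of a) + Additive.ofMul (Abelianization.of b)) = _
    rw [map_add]
  let f : Fin n → (G →* Zm 1) := fun i => MonoidHom.mk'
    (fun g => Multiplicative.ofAdd (fun _ => (F g).1 i))
    (by
      intro a b
      have h1 : (F (a * b)).1 i = (F a).1 i + (F b).1 i := by rw [hF]; simp
      show Multiplicative.ofAdd _ = Multiplicative.ofAdd _ * Multiplicative.ofAdd _
      rw [← ofAdd_add]
      congr 1
      funext j
      simpa using h1)
  set K := ⨅ i : Fin n, (f i).ker with hK
  have hKfg : K.FG := fg_iInf_of_normal hw hGfg n _ (fun i => MonoidHom.normal_ker _)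
    (fun i => hker _)
  have hcomK : commutator G ≤ K := le_iInf fun i => Abelianization.commutator_subset_ker _
  -- finiteness of the torsion part
  haveI : ∀ i : ι, NeZero (p i ^ e i) := fun i => ⟨pow_ne_zero _ (hp i).ne_zero⟩
  haveI : Finite T := Finite.of_equiv _ DFinsupp.equivFunOnFintype.symm
  -- the quotient map from K to the torsion part
  let q : ↥K →* Multiplicative T := MonoidHom.mk'
    (fun k => Multiplicative.ofAdd (F k.1).2)
    (by
      intro a b
      show Multiplicative.ofAdd (F (a.1 * b.1)).2 = _
      rw [hF]
      rfl)
  have hkerq : q.ker = (commutator G).subgroupOf K := by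
    ext k
    rw [MonoidHom.mem_ker, Subgroup.mem_subgroupOf]
    show Multiplicative.ofAdd (F k.1).2 = 1 ↔ (k : G) ∈ commutator G
    rw [← ker_abelianization_of, MonoidHom.mem_ker]
    constructor
    · intro h
      have h2 : (F k.1).2 = 0 := by simpa using congrArg Multiplicative.toAdd h
      have h1 : (F k.1).1 = 0 := by
        ext i
        have h3 : (k : G) ∈ (f i).ker := Subgroup.mem_iInf.mp k.2 i
        rw [MonoidHom.mem_ker] at h3
        have h4 := congrFun (congrArg Multiplicative.toAdd h3) 0
        exact h4
      have h5 : F k.1 = 0 := Prod.ext h1 h2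
      have h6 : Additive.ofMul (Abelianization.of k.1) = 0 := by
        apply eqv.injective
        rw [map_zero]
        exact h5
      simpa using congrArg Additive.toMul h6
    · intro h
      have h7 : F k.1 = 0 := by
        show eqv (Additive.ofMul (Abelianization.of k.1)) = 0
        rw [h]
        exact map_zero eqv
      rw [show (F k.1).2 = 0 from by rw [h7]; rfl]
      rfl
  haveI : Group.FG ↥K := (Group.fg_iff_subgroup_fg K).mpr hKfg
  haveI : q.ker.FiniteIndex := by
    constructor
    rw [Subgroup.index_ker]
    exact Nat.card_ne_zero.mpr ⟨⟨1⟩, inferInstance⟩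
  haveI : Group.FG ↥q.ker := Subgroup.fg_of_index_ne_zero q.ker
  have h8 : ((commutator G).subgroupOf K).FG := by
    rw [← hkerq]; exact (Group.fg_iff_subgroup_fg _).mp ‹_›
  have h9 := subgroup_fg_map K.subtype h8
  rwa [Subgroup.subgroupOf_map_subtype, inf_eq_left.mpr hcomK] at h9



lemma backward {m : ℕ} (hc : Subgroup.center G = ⊥) (hw : WeaklyHowson G)
    (hfix : ∀ ψ : G ≃* G, (fixedSubgroup ψ.toMonoidHom).FG) (hcomm : (commutator G).FG)
    (φ : (G × Multiplicative (Fin m → ℤ)) ≃* (G × Multiplicative (Fin m → ℤ))) :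
    (fixedSubgroup φ.toMonoidHom).FG := by
  set Z := Multiplicative (Fin m → ℤ) with hZdef
  have hGfg : Group.FG G := by
    have h := hfix (MulEquiv.refl G)
    have htop : fixedSubgroup (MulEquiv.refl G).toMonoidHom = ⊤ := by
      ext g; simp [mem_fixedSubgroup_iff]
    exact Group.fg_def.mpr (htop ▸ h)
  haveI hZfg : Group.FG Z := by
    have : AddGroup.FG (Fin m → ℤ) := Module.Finite.iff_addGroup_fg.mp inferInstance
    exact Group.fg_of_mul_group_fg
  -- center facts
  have hcent : ∀ x : G × Z, x ∈ Subgroup.center (G × Z) ↔ x.1 = 1 := by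
    intro x
    rw [Subgroup.mem_center_iff]
    constructor
    · intro h
      have hx : x.1 ∈ Subgroup.center G :=
        Subgroup.mem_center_iff.mpr fun g => congrArg Prod.fst (h (g, 1))
      rw [hc] at hx
      exact hx
    · intro h g
      ext : 1
      · show g.1 * x.1 = x.1 * g.1
        rw [h, one_mul, mul_one]
      · exact mul_comm _ _
  have hφc : ∀ x : G × Z, x.1 = 1 → (φ x).1 = 1 := by
    intro x hx
    refine (hcent _).mp (Subgroup.mem_center_iff.mpr fun g => ?_)
    have h1 := Subgroup.mem_center_iff.mp ((hcent x).mpr hx) (φ.symm g)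
    have := congrArg φ h1
    simpa [map_mul] using this
  have hφsc : ∀ x : G × Z, x.1 = 1 → (φ.symm x).1 = 1 := by
    intro x hx
    refine (hcent _).mp (Subgroup.mem_center_iff.mpr fun g => ?_)
    have h1 := Subgroup.mem_center_iff.mp ((hcent x).mpr hx) (φ g)
    have := congrArg φ.symm h1
    simpa [map_mul] using this
  -- the induced automorphism α of G
  let α : G ≃* G :=
  { toFun := fun g => (φ (g, 1)).1
    invFun := fun g => (φ.symm (g, 1)).1
    left_inv := by
      intro g
      have h1 : (((φ (g, 1)).1 : G), (1 : Z)) = φ (g, 1) * (1, ((φ (g, 1)).2)⁻¹) := by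
        ext : 1
        · show (φ (g, 1)).1 = (φ (g, 1)).1 * 1
          rw [mul_one]
        · show (1 : Z) = (φ (g, 1)).2 * ((φ (g, 1)).2)⁻¹
          rw [mul_inv_cancel]
      calc (φ.symm ((φ (g, 1)).1, 1)).1
          = (φ.symm (φ (g, 1)) * φ.symm (1, ((φ (g, 1)).2)⁻¹)).1 := by
            rw [← map_mul, ← h1]
        _ = g * (φ.symm (1, ((φ (g, 1)).2)⁻¹)).1 := by rw [φ.symm_apply_apply]; rfl
        _ = g := by rw [hφsc _ rfl, mul_one]
    right_inv := by
      intro g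
      have h1 : (((φ.symm (g, 1)).1 : G), (1 : Z)) = φ.symm (g, 1) * (1, ((φ.symm (g, 1)).2)⁻¹) := by
        ext : 1
        · show (φ.symm (g, 1)).1 = (φ.symm (g, 1)).1 * 1
          rw [mul_one]
        · show (1 : Z) = (φ.symm (g, 1)).2 * ((φ.symm (g, 1)).2)⁻¹
          rw [mul_inv_cancel]
      calc (φ ((φ.symm (g, 1)).1, 1)).1
          = (φ (φ.symm (g, 1)) * φ (1, ((φ.symm (g, 1)).2)⁻¹)).1 := by
            rw [← map_mul, ← h1]
        _ = g * (φ (1, ((φ.symm (g, 1)).2)⁻¹)).1 := by rw [φ.apply_symm_apply]; rfl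
        _ = g := by rw [hφc _ rfl, mul_one]
    map_mul' := by
      intro a b
      show (φ (a * b, 1)).1 = (φ (a, 1)).1 * (φ (b, 1)).1
      rw [show ((a * b : G), (1 : Z)) = (a, 1) * (b, 1) by ext <;> simp, map_mul]
      rfl }
  let f : G →* Z := MonoidHom.mk' (fun g => (φ (g, 1)).2) (by
    intro a b
    show (φ (a * b, 1)).2 = (φ (a, 1)).2 * (φ (b, 1)).2
    rw [show ((a * b : G), (1 : Z)) = (a, 1) * (b, 1) by ext <;> simp, map_mul]
    rfl)
  let M : Z →* Z := MonoidHom.mk' (fun a => (φ (1, a)).2) (by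
    intro a b
    show (φ (1, a * b)).2 = (φ (1, a)).2 * (φ (1, b)).2
    rw [show ((1 : G), a * b) = (1, a) * (1, b) by ext <;> simp, map_mul]
    rfl)
  let N : Z →* Z := MonoidHom.mk' (fun a => a * (M a)⁻¹) (by
    intro a b
    show (a * b) * (M (a * b))⁻¹ = (a * (M a)⁻¹) * (b * (M b)⁻¹)
    rw [map_mul, mul_inv]
    exact mul_mul_mul_comm _ _ _ _)
  -- membership in the fixed subgroup
  have hmem : ∀ g : G, ∀ a : Z, ((g, a) ∈ fixedSubgroup φ.toMonoidHom ↔ (α g = g ∧ N a = f g)) := by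
    intro g a
    have hsplit : φ (g, a) = (α g, f g * M a) := by
      rw [show ((g : G), a) = (g, 1) * (1, a) by ext <;> simp, map_mul]
      ext
      · show (φ (g, 1)).1 * (φ (1, a)).1 = α g
        rw [hφc (1, a) rfl, mul_one]
        rfl
      · rfl
    rw [mem_fixedSubgroup_iff]
    rw [show φ.toMonoidHom (g, a) = φ (g, a) from rfl, hsplit, Prod.mk.injEq]
    constructor
    · rintro ⟨h1, h2⟩
      refine ⟨h1, ?_⟩
      show a * (M a)⁻¹ = f g
      exact mul_inv_eq_iff_eq_mul.mpr h2.symm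
    · rintro ⟨h1, h2⟩
      refine ⟨h1, ?_⟩
      have h2' : a * (M a)⁻¹ = f g := h2
      exact (mul_inv_eq_iff_eq_mul.mp h2').symm
  -- the subgroup L
  set L := Subgroup.comap f N.range with hLdef
  have hLnormal : L.Normal := by
    constructor
    intro x hx g
    rw [hLdef, Subgroup.mem_comap] at hx ⊢
    rw [map_mul, map_mul, map_inv]
    rw [show f g * f x * (f g)⁻¹ = f x from by rw [mul_comm (f g) (f x), mul_inv_cancel_right]]
    exact hx
  haveI : Group.FG (Abelianization G) :=
    Group.fg_of_surjective (f := Abelianization.of)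
      (fun x => Quotient.inductionOn' x fun g => ⟨g, rfl⟩)
  have hLfg : L.FG := by
    refine fg_of_ker_le Abelianization.of L ?_ ?_
    · rw [ker_abelianization_of]
      refine le_trans (Abelianization.commutator_subset_ker f) ?_
      intro x hx
      rw [Subgroup.mem_comap]
      rw [MonoidHom.mem_ker] at hx
      rw [hx]
      exact one_mem _
    · rw [ker_abelianization_of]
      exact hcomm
  have hFixfg : (fixedSubgroup α.toMonoidHom).FG := hfix α
  have hHfg : (L ⊓ fixedSubgroup α.toMonoidHom).FG := hw _ _ hLnormal hLfg hFixfg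
  -- projection from the fixed subgroup to G
  set p : ↥(fixedSubgroup φ.toMonoidHom) →* G :=
    (MonoidHom.fst G Z).comp (fixedSubgroup φ.toMonoidHom).subtype with hpdef
  have hrange : p.range = L ⊓ fixedSubgroup α.toMonoidHom := by
    ext g
    constructor
    · rintro ⟨⟨⟨g', a⟩, hmemx⟩, rfl⟩
      obtain ⟨h1, h2⟩ := (hmem g' a).mp hmemx
      constructor
      · exact ⟨a, h2⟩
      · exact h1
    · rintro ⟨hgL, hgF⟩
      obtain ⟨a, ha⟩ := hgL
      exact ⟨⟨(g, a), (hmem g a).mpr ⟨hgF, ha⟩⟩, rfl⟩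
  have hkerp : p.ker.FG := by
    let r : ↥p.ker →* Z := MonoidHom.mk' (fun x => (x.1.1 : G × Z).2) (fun a b => rfl)
    have hrinj : Function.Injective r := by
      intro x y hxy
      have hx1 : ((x.1 : G × Z)).1 = 1 := x.2
      have hy1 : ((y.1 : G × Z)).1 = 1 := y.2
      apply Subtype.ext
      apply Subtype.ext
      ext : 1
      · rw [hx1, hy1]
      · exact hxy
    haveI : Group.FG ↥r.range := (Group.fg_iff_subgroup_fg _).mpr (subgroup_fg_of_comm_fg _)
    have : Group.FG ↥p.ker :=
      Group.fg_of_surjective (f := (MonoidHom.ofInjective hrinj).symm.toMonoidHom)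
        (MonoidHom.ofInjective hrinj).symm.surjective
    exact (Group.fg_iff_subgroup_fg _).mp this
  have hrangefg : p.range.FG := by rw [hrange]; exact hHfg
  exact (Group.fg_iff_subgroup_fg _).mp (group_fg_of_ker_range p hkerp hrangefg)


end Aux

/-- For a centerless group `G` with the weakly Howson property, `G × ℤᵐ` has FGFP_a
for every `m ≥ 1` iff `G` has FGFP_a and `[G, G]` is finitely generated. -/
theorem fgfp_prod_int_pow_iff {G : Type*} [Group G]
    (hc : Subgroup.center G = ⊥) (hw : WeaklyHowson G) :
    (∀ m : ℕ, 1 ≤ m →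
        ∀ φ : (G × Multiplicative (Fin m → ℤ)) ≃* (G × Multiplicative (Fin m → ℤ)),
          (fixedSubgroup φ.toMonoidHom).FG) ↔
      ((∀ ψ : G ≃* G, (fixedSubgroup ψ.toMonoidHom).FG) ∧ (commutator G).FG) := by
  constructor
  · intro hi
    have h1 := hi 1 le_rfl
    have hGfg : Group.FG G := group_fg_of_inv_fix
      (h1 ((MulEquiv.refl G).prodCongr (MulEquiv.inv (Zm 1))))
    have hker : ∀ f : G →* Zm 1, f.ker.FG := fun f => ker_fg_of_shear f (h1 (shear f))
    constructor
    · intro ψ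
      rw [fixedSubgroup_eq_map_prodCongr ψ (MulEquiv.refl (Zm 1))]
      exact subgroup_fg_map _ (h1 _)
    · exact commutator_fg_aux hw hGfg hker
  · rintro ⟨hfix, hcomm⟩ m hm φ
    exact backward hc hw hfix hcomm φ
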